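/- Let μ, ν ∈ Par_n and p ∈ Z_{≥0} with |μ| + |ν| + p even, and suppose (μ, ν, (p)) satisfies every extended Horn inequality. Set k = (|μ| + |ν| − p)/2. Then μ/(μ∧ν) and ν/(μ∧ν) are horizontal strips, and there exist at least |μ∧ν| − k columns i such that μ'_i = ν'_i > 0, where μ' denotes the conjugate (transpose) partition of μ. -/

import Mathlib

/-- `μ` is a partition with at most `n` parts: a weakly decreasing sequence
`μ 0 ≥ μ 1 ≥ ⋯` of naturals (the paper's part `μ_{i+1}` is `μ i`, i.e. we use
0-indexing) vanishing from index `n` on. -/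
def IsPartitionN (n : ℕ) (μ : ℕ → ℕ) : Prop :=
  Antitone μ ∧ ∀ i, n ≤ i → μ i = 0

/-- The cells `(row, column)` (both 0-indexed) of the skew shape `lam/mu`. -/
def skewCells (lam mu : ℕ → ℕ) : Set (ℕ × ℕ) :=
  {p | mu p.1 ≤ p.2 ∧ p.2 < lam p.1}

/-- `T` is a Littlewood–Richardson skew tableau of shape `lam/mu` and content
`nu`: the shape `mu` is contained in `lam`, rows weakly increase, columns
strictly increase, the (0-indexed) letter `t` occurs `nu t` times, and every
prefix of the reverse reading word (rows read right-to-left, top-to-bottom)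
contains at least as many letters `t` as letters `t+1`. -/
def IsLRTableau (lam mu nu : ℕ → ℕ) (T : ℕ × ℕ → ℕ) : Prop :=
  (∀ i, mu i ≤ lam i) ∧
  (∀ i j j', mu i ≤ j → j ≤ j' → j' < lam i → T (i, j) ≤ T (i, j')) ∧
  (∀ i j, (i, j) ∈ skewCells lam mu → (i + 1, j) ∈ skewCells lam mu →
    T (i, j) < T (i + 1, j)) ∧
  (∀ t, Set.ncard {p ∈ skewCells lam mu | T p = t} = nu t) ∧
  (∀ i j t,
    Set.ncard {p ∈ skewCells lam mu |
        T p = t + 1 ∧ (p.1 < i ∨ (p.1 = i ∧ j ≤ p.2))} ≤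
      Set.ncard {p ∈ skewCells lam mu |
        T p = t ∧ (p.1 < i ∨ (p.1 = i ∧ j ≤ p.2))})

/-- The Littlewood–Richardson coefficient `c^{lam}_{mu,nu}`: the number of
Littlewood–Richardson skew tableaux of shape `lam/mu` and content `nu`
(tableaux are normalized to vanish off the shape). -/
noncomputable def lrCoeff (lam mu nu : ℕ → ℕ) : ℕ :=
  Set.ncard {T : ℕ × ℕ → ℕ | IsLRTableau lam mu nu T ∧
    ∀ p ∉ skewCells lam mu, T p = 0}

/-- The Newell–Littlewood number
`N_{μ,ν,λ} = ∑_{α,β,γ} c^μ_{α,β} c^ν_{α,γ} c^λ_{β,γ}`, realized as the number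
of tuples `((α, β, γ), (T₁, T₂, T₃))` where `α, β, γ` are partitions and
`T₁, T₂, T₃` are Littlewood–Richardson tableaux witnessing the coefficients
`c^μ_{α,β}`, `c^ν_{α,γ}` and `c^λ_{β,γ}` respectively. -/
noncomputable def nlNumber (mu nu lam : ℕ → ℕ) : ℕ :=
  Set.ncard {x : ((ℕ → ℕ) × (ℕ → ℕ) × (ℕ → ℕ)) ×
      ((ℕ × ℕ → ℕ) × (ℕ × ℕ → ℕ) × (ℕ × ℕ → ℕ)) |
    Antitone x.1.1 ∧ Antitone x.1.2.1 ∧ Antitone x.1.2.2 ∧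
    (IsLRTableau mu x.1.1 x.1.2.1 x.2.1 ∧
      ∀ p ∉ skewCells mu x.1.1, x.2.1 p = 0) ∧
    (IsLRTableau nu x.1.1 x.1.2.2 x.2.2.1 ∧
      ∀ p ∉ skewCells nu x.1.1, x.2.2.1 p = 0) ∧
    (IsLRTableau lam x.1.2.1 x.1.2.2 x.2.2.2 ∧
      ∀ p ∉ skewCells lam x.1.2.1, x.2.2.2 p = 0)}

/-- For `I = {i₁ < ⋯ < i_d} ⊆ {0, 1, 2, …}` (the 0-indexed version of the
paper's subsets of positive integers), `tauPartition I` is `τ(I)`, i.e. the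
partition whose (0-indexed) part `t` is `i_{d-t} − (d−t−1) - 1`; for the
paper's 1-indexed sets this is `τ(I) = (i_d − d ≥ ⋯ ≥ i₂ − 2 ≥ i₁ − 1)`. -/
def tauPartition (I : Finset ℕ) : ℕ → ℕ := fun t =>
  if t < I.card then
    (I.sort (· ≤ ·)).getD (I.card - 1 - t) 0 - (I.card - 1 - t)
  else 0

/-- Conditions (I)–(III) defining the set `𝒢_n` of data for the extended Horn
inequalities: all six sets are subsets of `{0, …, n−1}` (the 0-indexed version
of `[n] = {1, …, n}`), `A ∩ A' = B ∩ B' = C ∩ C' = ∅`,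
`|A| = |B'| + |C'|`, `|B| = |A'| + |C'|`, `|C| = |A'| + |B'|`, and there exist
`A₁, A₂, B₁, B₂, C₁, C₂ ⊆ {0, …, n−1}` with `|A₁| = |A₂| = |A'|`,
`|B₁| = |B₂| = |B'|`, `|C₁| = |C₂| = |C'|` such that
`c^{τ(A')}_{τ(A₁),τ(A₂)}, c^{τ(B')}_{τ(B₁),τ(B₂)}, c^{τ(C')}_{τ(C₁),τ(C₂)} > 0`
and `c^{τ(A)}_{τ(B₁),τ(C₂)}, c^{τ(B)}_{τ(C₁),τ(A₂)}, c^{τ(C)}_{τ(A₁),τ(B₂)} > 0`. -/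
def IsExtHornTuple (n : ℕ) (A A' B B' C C' : Finset ℕ) : Prop :=
  A ⊆ Finset.range n ∧ A' ⊆ Finset.range n ∧ B ⊆ Finset.range n ∧
    B' ⊆ Finset.range n ∧ C ⊆ Finset.range n ∧ C' ⊆ Finset.range n ∧
  Disjoint A A' ∧ Disjoint B B' ∧ Disjoint C C' ∧
  A.card = B'.card + C'.card ∧ B.card = A'.card + C'.card ∧
    C.card = A'.card + B'.card ∧
  ∃ A₁ A₂ B₁ B₂ C₁ C₂ : Finset ℕ,
    A₁ ⊆ Finset.range n ∧ A₂ ⊆ Finset.range n ∧ B₁ ⊆ Finset.range n ∧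
      B₂ ⊆ Finset.range n ∧ C₁ ⊆ Finset.range n ∧ C₂ ⊆ Finset.range n ∧
    A₁.card = A'.card ∧ A₂.card = A'.card ∧ B₁.card = B'.card ∧
      B₂.card = B'.card ∧ C₁.card = C'.card ∧ C₂.card = C'.card ∧
    0 < lrCoeff (tauPartition A') (tauPartition A₁) (tauPartition A₂) ∧
    0 < lrCoeff (tauPartition B') (tauPartition B₁) (tauPartition B₂) ∧
    0 < lrCoeff (tauPartition C') (tauPartition C₁) (tauPartition C₂) ∧
    0 < lrCoeff (tauPartition A) (tauPartition B₁) (tauPartition C₂) ∧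
    0 < lrCoeff (tauPartition B) (tauPartition C₁) (tauPartition A₂) ∧
    0 < lrCoeff (tauPartition C) (tauPartition A₁) (tauPartition B₂)

/-- `(μ, ν, lam)` satisfies every extended Horn inequality (with ambient set
`{0, …, n−1}`). -/
def SatisfiesExtHorn (n : ℕ) (μ ν lam : ℕ → ℕ) : Prop :=
  ∀ A A' B B' C C' : Finset ℕ, IsExtHornTuple n A A' B B' C C' →
    (0 : ℤ) ≤ (∑ i ∈ A, (μ i : ℤ)) - (∑ i ∈ A', (μ i : ℤ)) +
      (∑ j ∈ B, (ν j : ℤ)) - (∑ j ∈ B', (ν j : ℤ)) +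
      (∑ k ∈ C, (lam k : ℤ)) - (∑ k ∈ C', (lam k : ℤ))

/-- The single-row partition `(p)`. -/
def rowPartition (p : ℕ) : ℕ → ℕ := fun i => if i = 0 then p else 0

/-- The conjugate (transpose) partition: `conjugatePart μ i` is the number of
boxes in the (0-indexed) column `i` of `μ`, i.e. `#{j : μ j > i}`; in the
paper's 1-indexed notation this is `μ'_{i+1} = #{j : μ_j ≥ i + 1}`. -/
noncomputable def conjugatePart (μ : ℕ → ℕ) : ℕ → ℕ := fun i =>
  Set.ncard {j : ℕ | i < μ j}


namespace RowCaseAux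

/-! ### sorted list and `tauPartition` lemmas -/

lemma sorted_getD_gap (L : List ℕ) (hL : L.Pairwise (· < ·)) :
    ∀ k k' : ℕ, k' ≤ k → k < L.length → L.getD k' 0 + (k - k') ≤ L.getD k 0 := by
  intro k
  induction k with
  | zero => intro k' hk' hlen; interval_cases k'; simp
  | succ k ih =>
    intro k' hk' hlen
    rcases Nat.eq_or_lt_of_le hk' with h | h
    · subst h; simp
    · have hk'k : k' ≤ k := by omega
      have hlen' : k < L.length := by omega
      have h1 := ih k' hk'k hlen'
      have h2 : L.getD k 0 < L.getD (k+1) 0 := by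
        rw [List.getD_eq_getElem L 0 hlen', List.getD_eq_getElem L 0 hlen]
        exact List.pairwise_iff_get.mp hL ⟨k, hlen'⟩ ⟨k+1, hlen⟩ (by simp)
      omega

def clSet (f : ℕ → ℕ) (d : ℕ) : Finset ℕ :=
  (Finset.range d).image (fun j => f (d - 1 - j) + j)

lemma clSet_strictMono {f : ℕ → ℕ} (hf : Antitone f) {d j j' : ℕ}
    (h : j < j') (_ : j' < d) : f (d - 1 - j) + j < f (d - 1 - j') + j' := by
  have := hf (show d - 1 - j' ≤ d - 1 - j by omega)
  omega

lemma clSet_injOn {f : ℕ → ℕ} (hf : Antitone f) (d : ℕ) :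
    Set.InjOn (fun j => f (d - 1 - j) + j) ↑(Finset.range d) := by
  intro a ha b hb hab
  simp only [Finset.coe_range, Set.mem_Iio] at ha hb
  by_contra hne
  rcases Nat.lt_or_ge a b with h | h
  · exact absurd hab (Nat.ne_of_lt (clSet_strictMono hf h hb))
  · have h' : b < a := by omega
    exact absurd hab.symm (Nat.ne_of_lt (clSet_strictMono hf h' ha))

lemma clSet_card {f : ℕ → ℕ} (hf : Antitone f) (d : ℕ) : (clSet f d).card = d := by
  rw [clSet, Finset.card_image_of_injOn (clSet_injOn hf d), Finset.card_range]

lemma clSet_sort {f : ℕ → ℕ} (hf : Antitone f) (d : ℕ) :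
    (clSet f d).sort (· ≤ ·) = (List.range d).map (fun j => f (d - 1 - j) + j) := by
  refine (fun h1 h2 h3 => List.Perm.eq_of_pairwise' (r := (· ≤ ·)) h2 h3 h1) ?_ ?_ ?_
  · rw [← Multiset.coe_eq_coe, Finset.sort_eq, clSet,
      Finset.image_val_of_injOn (clSet_injOn hf d), Finset.range_val]
    rfl
  · exact Finset.pairwise_sort _ _
  · apply List.Pairwise.imp le_of_lt
    rw [List.pairwise_map]
    refine List.Pairwise.imp_of_mem ?_ (List.pairwise_lt_range (n := d))
    intro a b ha hb hab
    exact clSet_strictMono hf hab (List.mem_range.mp hb)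

lemma tau_clSet {f : ℕ → ℕ} (hf : Antitone f) {d : ℕ} (hsupp : ∀ t, d ≤ t → f t = 0) :
    tauPartition (clSet f d) = f := by
  funext t
  rw [tauPartition, clSet_card hf]
  by_cases ht : t < d
  · rw [if_pos ht, clSet_sort hf]
    have hlen : d - 1 - t < ((List.range d).map (fun j => f (d - 1 - j) + j)).length := by
      simp; omega
    rw [List.getD_eq_getElem _ 0 hlen, List.getElem_map, List.getElem_range]
    have : d - 1 - (d - 1 - t) = t := by omega
    rw [this]; omega
  · rw [if_neg ht, hsupp t (by omega)]

lemma mem_clSet {f : ℕ → ℕ} {d x : ℕ} :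
    x ∈ clSet f d ↔ ∃ j < d, f (d - 1 - j) + j = x := by
  simp [clSet]

lemma tau_supp (S : Finset ℕ) {t : ℕ} (ht : S.card ≤ t) : tauPartition S t = 0 := by
  rw [tauPartition, if_neg (by omega)]

lemma sort_length (S : Finset ℕ) : (S.sort (· ≤ ·)).length = S.card :=
  Finset.length_sort _

lemma getD_ge_index (S : Finset ℕ) {j : ℕ} (hj : j < S.card) :
    j ≤ (S.sort (· ≤ ·)).getD j 0 := by
  have := sorted_getD_gap _ (Finset.sortedLT_sort S).pairwise j 0 (Nat.zero_le _)
    (by rw [sort_length]; exact hj)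
  omega

lemma tau_apply_add (S : Finset ℕ) {j : ℕ} (hj : j < S.card) :
    tauPartition S (S.card - 1 - j) + j = (S.sort (· ≤ ·)).getD j 0 := by
  have h1 : S.card - 1 - (S.card - 1 - j) = j := by omega
  rw [tauPartition, if_pos (by omega), h1]
  have := getD_ge_index S hj
  omega

lemma tau_apply_mem (S : Finset ℕ) {j : ℕ} (hj : j < S.card) :
    tauPartition S (S.card - 1 - j) + j ∈ S := by
  rw [tau_apply_add S hj]
  have hlen : j < (S.sort (· ≤ ·)).length := by rw [sort_length]; exact hj
  rw [List.getD_eq_getElem _ 0 hlen]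
  have := List.getElem_mem hlen
  exact (Finset.mem_sort _).mp this

lemma tau_antitone (S : Finset ℕ) : Antitone (tauPartition S) := by
  intro t t' htt'
  by_cases ht' : t' < S.card
  · have ht : t ≤ S.card - 1 := by omega
    rw [tauPartition, tauPartition, if_pos ht', if_pos (by omega)]
    have := sorted_getD_gap _ (Finset.sortedLT_sort S).pairwise (S.card - 1 - t)
      (S.card - 1 - t') (by omega) (by rw [sort_length]; omega)
    omega
  · rw [tau_supp S (by omega)]
    exact Nat.zero_le _

lemma tau_pos (S : Finset ℕ) (h0 : 0 ∉ S) {t : ℕ} (ht : t < S.card) :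
    1 ≤ tauPartition S t := by
  have hmem := tau_apply_mem S (j := 0) (by omega)
  have h1 : 1 ≤ tauPartition S (S.card - 1 - 0) := by
    rcases Nat.eq_zero_or_pos (tauPartition S (S.card - 1 - 0)) with h | h
    · rw [h] at hmem; simp at hmem; exact absurd hmem h0
    · exact h
  calc 1 ≤ tauPartition S (S.card - 1) := by simpa using h1
    _ ≤ tauPartition S t := tau_antitone S (by omega)

/-- the reduced tau function of `S` (assuming `0 ∉ S`) -/
def tauRed (S : Finset ℕ) : ℕ → ℕ :=
  fun t => tauPartition S t - if t < S.card then 1 else 0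

lemma tauRed_antitone (S : Finset ℕ) : Antitone (tauRed S) := by
  intro t t' htt'
  have h1 := tau_antitone S htt'
  unfold tauRed
  by_cases ht' : t' < S.card
  · rw [if_pos ht', if_pos (by omega)]; omega
  · rw [if_neg ht', tau_supp S (by omega)]; exact Nat.zero_le _

lemma tauRed_supp (S : Finset ℕ) {t : ℕ} (ht : S.card ≤ t) : tauRed S t = 0 := by
  unfold tauRed
  rw [if_neg (by omega), tau_supp S ht]

lemma insert_zero_eq (S : Finset ℕ) (h0 : 0 ∉ S) :
    insert 0 S = clSet (tauRed S) (S.card + 1) := by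
  symm
  apply Finset.eq_of_subset_of_card_le
  · intro x hx
    rcases mem_clSet.mp hx with ⟨j, hj, hx⟩
    rcases Nat.eq_zero_or_pos j with h | h
    · subst h
      simp only [Nat.add_sub_cancel, Nat.sub_zero, Nat.add_zero] at hx
      rw [tauRed_supp S (le_refl _)] at hx
      simp [← hx]
    · have hj' : j - 1 < S.card := by omega
      have hmem := tau_apply_mem S hj'
      have hidx : S.card + 1 - 1 - j = S.card - 1 - (j - 1) := by omega
      have hpos : 1 ≤ tauPartition S (S.card - 1 - (j-1)) := tau_pos S h0 (by omega)
      rw [hidx] at hx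
      have hval : tauRed S (S.card - 1 - (j - 1)) = tauPartition S (S.card - 1 - (j-1)) - 1 := by
        unfold tauRed; rw [if_pos (by omega)]
      rw [hval] at hx
      have : x = tauPartition S (S.card - 1 - (j-1)) + (j - 1) := by omega
      rw [this]
      exact Finset.mem_insert_of_mem hmem
  · rw [clSet_card (tauRed_antitone S), Finset.card_insert_of_notMem h0]

lemma tau_insert_zero (S : Finset ℕ) (h0 : 0 ∉ S) :
    tauPartition (insert 0 S) = tauRed S := by
  rw [insert_zero_eq S h0]
  exact tau_clSet (tauRed_antitone S) (fun t ht => tauRed_supp S (by omega))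

def onefun (k : ℕ) : ℕ → ℕ := fun t => if t < k then 1 else 0

lemma onefun_antitone (k : ℕ) : Antitone (onefun k) := by
  intro t t' h; unfold onefun
  by_cases ht' : t' < k
  · rw [if_pos ht', if_pos (by omega)]
  · rw [if_neg ht']; exact Nat.zero_le _

lemma onefun_supp (k : ℕ) : ∀ t, k ≤ t → onefun k t = 0 := by
  intro t ht; unfold onefun; rw [if_neg (by omega)]

def stepf (x : ℕ) : ℕ → ℕ := fun t => if t < 1 then x else 0

lemma stepf_antitone (x : ℕ) : Antitone (stepf x) := by
  intro t t' h; unfold stepf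
  by_cases ht' : t' < 1
  · rw [if_pos ht', if_pos (by omega)]
  · rw [if_neg ht']; exact Nat.zero_le _

lemma stepf_supp (x : ℕ) : ∀ t, 1 ≤ t → stepf x t = 0 := by
  intro t ht; unfold stepf; rw [if_neg (by omega)]

lemma stepf_le {x y : ℕ} (h : x ≤ y) : ∀ t, stepf x t ≤ stepf y t := by
  intro t; unfold stepf
  by_cases ht : t < 1
  · rw [if_pos ht, if_pos ht]; omega
  · rw [if_neg ht, if_neg ht]

lemma tau_singletonFun (x : ℕ) : tauPartition {x} = stepf x := by
  have h : ({x} : Finset ℕ) = clSet (stepf x) 1 := by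
    ext y; rw [mem_clSet]
    constructor
    · intro hy
      refine ⟨0, by omega, ?_⟩
      have : stepf x (1 - 1 - 0) = x := by unfold stepf; rw [if_pos (by omega)]
      rw [this]
      simpa using (Finset.mem_singleton.mp hy).symm
    · rintro ⟨j, hj, hy⟩
      interval_cases j
      have : stepf x (1 - 1 - 0) = x := by unfold stepf; rw [if_pos (by omega)]
      rw [this] at hy
      simp at hy ⊢; omega
  rw [h]
  exact tau_clSet (stepf_antitone x) (stepf_supp x)

lemma tau_empty : tauPartition ∅ = fun _ => 0 := by
  funext t; rw [tauPartition]; simp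

lemma tau_zero_singleton : tauPartition {0} = fun _ => 0 := by
  rw [tau_singletonFun 0]; funext t; unfold stepf; split <;> rfl

/-! ### existence of LR tableaux for row-wise complements -/

lemma seg_eq (r a b : ℕ) :
    {p : ℕ × ℕ | p.1 = r ∧ a ≤ p.2 ∧ p.2 < b} = ↑({r} ×ˢ Finset.Ico a b) := by
  ext ⟨x, y⟩
  simp only [Set.mem_setOf_eq, Finset.mem_coe, Finset.mem_product, Finset.mem_singleton,
    Finset.mem_Ico]

lemma seg_card (r a b : ℕ) :
    Set.ncard {p : ℕ × ℕ | p.1 = r ∧ a ≤ p.2 ∧ p.2 < b} = b - a := by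
  rw [seg_eq, Set.ncard_coe_finset]
  simp [Nat.card_Ico]

lemma mem_skewCells (lam mu : ℕ → ℕ) (p : ℕ × ℕ) :
    p ∈ skewCells lam mu ↔ mu p.1 ≤ p.2 ∧ p.2 < lam p.1 := Iff.rfl

lemma lrCoeff_pos' (lam mu nu : ℕ → ℕ) (s N : ℕ)
    (hml : ∀ i, mu i ≤ lam i)
    (hsupp : ∀ i, N ≤ i → lam i = 0)
    (hlow : ∀ i, i < s → lam i = mu i)
    (hnu : ∀ t, nu t = lam (t + s) - mu (t + s))
    (hanti : Antitone nu) :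
    0 < lrCoeff lam mu nu := by
  classical
  set T : ℕ × ℕ → ℕ :=
    fun p => if mu p.1 ≤ p.2 ∧ p.2 < lam p.1 then p.1 - s else 0 with hT
  have hrow_empty : ∀ i < s, ∀ j : ℕ, ¬(mu i ≤ j ∧ j < lam i) := by
    intro i hi j h; rw [hlow i hi] at h; omega
  have hTval : ∀ p ∈ skewCells lam mu, T p = p.1 - s := by
    intro p hp; rw [hT]; exact if_pos hp
  have hrow_ge : ∀ p ∈ skewCells lam mu, s ≤ p.1 := by
    intro p hp
    by_contra h
    exact hrow_empty p.1 (by omega) p.2 hp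
  have hcontent : ∀ t : ℕ, {p ∈ skewCells lam mu | T p = t} =
      {p : ℕ × ℕ | p.1 = t + s ∧ mu (t + s) ≤ p.2 ∧ p.2 < lam (t + s)} := by
    intro t
    ext ⟨x, y⟩
    constructor
    · rintro ⟨hc, hv⟩
      have hx : s ≤ x := hrow_ge _ hc
      rw [hTval _ hc] at hv
      have hx2 : x = t + s := by omega
      subst hx2
      exact ⟨rfl, hc⟩
    · rintro ⟨hx, hc⟩
      have hx' : x = t + s := hx
      subst hx'
      have hcell : ((t + s, y) : ℕ × ℕ) ∈ skewCells lam mu := hc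
      refine ⟨hcell, ?_⟩
      rw [hTval _ hcell]; omega
  have hL : ∀ i j t' : ℕ,
      {p ∈ skewCells lam mu | T p = t' ∧ (p.1 < i ∨ (p.1 = i ∧ j ≤ p.2))} =
      if t' + s < i then
        {p : ℕ × ℕ | p.1 = t' + s ∧ mu (t' + s) ≤ p.2 ∧ p.2 < lam (t' + s)}
      else if t' + s = i then
        {p : ℕ × ℕ | p.1 = t' + s ∧ max j (mu (t' + s)) ≤ p.2 ∧ p.2 < lam (t' + s)}
      else (∅ : Set (ℕ × ℕ)) := by
    intro i j t'
    ext ⟨x, y⟩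
    constructor
    · rintro ⟨hc, hv, hpos⟩
      have hx : s ≤ x := hrow_ge _ hc
      rw [hTval _ hc] at hv
      have hx2 : x = t' + s := by omega
      subst hx2
      rcases hpos with h | ⟨h1, h2⟩
      · rw [if_pos h]; exact ⟨rfl, hc⟩
      · rw [if_neg (by omega), if_pos h1]
        exact ⟨rfl, by rw [mem_skewCells] at hc; simp at hc ⊢; omega⟩
    · intro hmem
      by_cases h1 : t' + s < i
      · rw [if_pos h1] at hmem
        obtain ⟨hx, hc⟩ := hmem
        have hx' : x = t' + s := hx
        subst hx'
        have hcell : ((t' + s, y) : ℕ × ℕ) ∈ skewCells lam mu := hc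
        exact ⟨hcell, by rw [hTval _ hcell]; omega, Or.inl (by omega)⟩
      · by_cases h2 : t' + s = i
        · rw [if_neg h1, if_pos h2] at hmem
          obtain ⟨hx, hc⟩ := hmem
          have hx' : x = t' + s := hx
          subst hx'
          have hc' : max j (mu (t' + s)) ≤ y ∧ y < lam (t' + s) := hc
          have hcell : ((t' + s, y) : ℕ × ℕ) ∈ skewCells lam mu := by
            rw [mem_skewCells]
            simp only
            omega
          exact ⟨hcell, by rw [hTval _ hcell]; omega, Or.inr ⟨by omega, by omega⟩⟩
        · rw [if_neg h1, if_neg h2] at hmem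
          exact absurd hmem (Set.notMem_empty _)
  have hTLR : IsLRTableau lam mu nu T := by
    refine ⟨hml, ?_, ?_, ?_, ?_⟩
    · intro i j j' h1 h2 h3
      have c1 : mu i ≤ j ∧ j < lam i := ⟨h1, by omega⟩
      have c2 : mu i ≤ j' ∧ j' < lam i := ⟨by omega, h3⟩
      rw [hT]; simp only [if_pos c1, if_pos c2]; exact le_refl _
    · intro a b hc1 hc2
      have ha : s ≤ a := hrow_ge _ hc1
      rw [hTval _ hc1, hTval _ hc2]
      simp only
      omega
    · intro t
      rw [hcontent t, seg_card, hnu t]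
    · intro i j t
      rw [hL i j (t + 1), hL i j t]
      have hmono : nu (t + 1) ≤ nu t := hanti (by omega)
      rcases lt_trichotomy (t + 1 + s) i with h | h | h
      · rw [if_pos h, if_pos (by omega), seg_card, seg_card]
        have e1 := hnu (t + 1); have e2 := hnu t; omega
      · rw [if_neg (by omega), if_pos h, if_pos (by omega), seg_card, seg_card]
        have e1 := hnu (t + 1); have e2 := hnu t
        have : lam (t + 1 + s) - max j (mu (t + 1 + s)) ≤ lam (t + 1 + s) - mu (t + 1 + s) := by
          omega
        omega
      · rw [if_neg (by omega), if_neg (by omega)]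
        simp
  set SS : Set (ℕ × ℕ → ℕ) := {T' | IsLRTableau lam mu nu T' ∧
    ∀ p ∉ skewCells lam mu, T' p = 0} with hSS
  have hTmem : T ∈ SS := by
    refine ⟨hTLR, ?_⟩
    intro p hp
    rw [hT]
    exact if_neg hp
  have hcellfin : (skewCells lam mu).Finite := by
    apply Set.Finite.subset
      ((Finset.range N ×ˢ Finset.range ((Finset.range N).sup lam)).finite_toSet)
    intro p hp
    rw [mem_skewCells] at hp
    have hpN : p.1 < N := by
      by_contra h
      rw [hsupp p.1 (by omega)] at hp; omega
    have : lam p.1 ≤ (Finset.range N).sup lam :=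
      Finset.le_sup (Finset.mem_range.mpr hpN)
    simp only [Finset.coe_product, Set.mem_prod, Finset.mem_coe, Finset.mem_range]
    exact ⟨hpN, by omega⟩
  have hbound : ∀ T' ∈ SS, ∀ p ∈ skewCells lam mu, T' p < N := by
    intro T' hT' p hp
    by_contra h
    have hnu0 : nu (T' p) = 0 := by
      rw [hnu]
      rw [hsupp (T' p + s) (by omega)]
      omega
    have hset := hT'.1.2.2.2.1 (T' p)
    rw [hnu0] at hset
    have hfin : {q ∈ skewCells lam mu | T' q = T' p}.Finite :=
      hcellfin.subset (fun q hq => hq.1)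
    have := (Set.ncard_eq_zero hfin).mp hset
    have hpm : p ∈ {q ∈ skewCells lam mu | T' q = T' p} := ⟨hp, rfl⟩
    rw [this] at hpm
    exact hpm
  have : Finite ↥(skewCells lam mu) := hcellfin.to_subtype
  set Φ : (ℕ × ℕ → ℕ) → (↥(skewCells lam mu) → Fin (N + 1)) :=
    fun T' q => ⟨min (T' ↑q) N, by omega⟩ with hΦ
  have hinj : Set.InjOn Φ SS := by
    intro T1 h1 T2 h2 heq
    funext p
    by_cases hp : p ∈ skewCells lam mu
    · have := congrFun heq ⟨p, hp⟩
      rw [hΦ] at this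
      simp only [Fin.mk.injEq] at this
      have b1 := hbound T1 h1 p hp
      have b2 := hbound T2 h2 p hp
      omega
    · rw [h1.2 p hp, h2.2 p hp]
  have hfin : SS.Finite := Set.Finite.of_finite_image (Set.toFinite _) hinj
  rw [lrCoeff]
  exact (Set.ncard_pos hfin).mpr ⟨T, hTmem⟩

lemma lr_refl (lam : ℕ → ℕ) (N : ℕ) (hsupp : ∀ i, N ≤ i → lam i = 0) :
    0 < lrCoeff lam lam (fun _ => 0) :=
  lrCoeff_pos' lam lam _ 0 N (fun _ => le_refl _) hsupp
    (fun i hi => absurd hi (Nat.not_lt_zero i)) (fun t => by omega) antitone_const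

lemma lr_full (lam : ℕ → ℕ) (N : ℕ) (hsupp : ∀ i, N ≤ i → lam i = 0)
    (hanti : Antitone lam) : 0 < lrCoeff lam (fun _ => 0) lam :=
  lrCoeff_pos' lam (fun _ => 0) lam 0 N (fun _ => Nat.zero_le _) hsupp
    (fun i hi => absurd hi (Nat.not_lt_zero i)) (fun t => by simp) hanti

lemma lr_step {a b : ℕ} (h : a ≤ b) :
    0 < lrCoeff (stepf b) (stepf a) (stepf (b - a)) := by
  apply lrCoeff_pos' _ _ _ 0 1 (stepf_le h) (stepf_supp b)
    (fun i hi => absurd hi (Nat.not_lt_zero i))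
  · intro t
    unfold stepf
    by_cases ht : t < 1
    · rw [if_pos ht, if_pos (show t + 0 < 1 by omega), if_pos (show t + 0 < 1 by omega)]
    · rw [if_neg ht, if_neg (show ¬ t + 0 < 1 by omega), if_neg (show ¬ t + 0 < 1 by omega)]
  · exact stepf_antitone _

/-! ### the two horizontal-strip inequalities -/

lemma strip_mu {n p : ℕ} {μ ν : ℕ → ℕ}
    (hEH : SatisfiesExtHorn n μ ν (rowPartition p)) {i : ℕ} (hi : i + 1 < n) :
    μ (i + 1) ≤ ν i := by
  have htuple : IsExtHornTuple n ∅ {i+1} {i} ∅ {1} ∅ := by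
    refine ⟨Finset.empty_subset _,
      Finset.singleton_subset_iff.mpr (Finset.mem_range.mpr (by omega)),
      Finset.singleton_subset_iff.mpr (Finset.mem_range.mpr (by omega)),
      Finset.empty_subset _,
      Finset.singleton_subset_iff.mpr (Finset.mem_range.mpr (by omega)),
      Finset.empty_subset _,
      Finset.disjoint_empty_left _, Finset.disjoint_empty_right _,
      Finset.disjoint_empty_right _, by simp, by simp, by simp,
      {1}, {i}, ∅, ∅, ∅, ∅,
      Finset.singleton_subset_iff.mpr (Finset.mem_range.mpr (by omega)),
      Finset.singleton_subset_iff.mpr (Finset.mem_range.mpr (by omega)),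
      Finset.empty_subset _, Finset.empty_subset _, Finset.empty_subset _,
      Finset.empty_subset _, by simp, by simp, by simp, by simp, by simp, by simp,
      ?_, ?_, ?_, ?_, ?_, ?_⟩
    · rw [tau_singletonFun, tau_singletonFun, tau_singletonFun]
      have : stepf i = stepf (i + 1 - 1) := by norm_num
      rw [this]
      exact lr_step (by omega)
    · rw [tau_empty]
      exact lr_refl _ 0 (fun _ _ => rfl)
    · rw [tau_empty]
      exact lr_refl _ 0 (fun _ _ => rfl)
    · rw [tau_empty]
      exact lr_refl _ 0 (fun _ _ => rfl)
    · rw [tau_singletonFun, tau_empty]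
      exact lr_full (stepf i) 1 (stepf_supp i) (stepf_antitone i)
    · rw [tau_singletonFun, tau_empty]
      exact lr_refl (stepf 1) 1 (stepf_supp 1)
  have hineq := hEH ∅ {i+1} {i} ∅ {1} ∅ htuple
  simp only [Finset.sum_empty, Finset.sum_singleton] at hineq
  have hrp : rowPartition p 1 = 0 := by rw [rowPartition]; norm_num
  rw [hrp] at hineq
  omega

lemma strip_nu {n p : ℕ} {μ ν : ℕ → ℕ}
    (hEH : SatisfiesExtHorn n μ ν (rowPartition p)) {i : ℕ} (hi : i + 1 < n) :
    ν (i + 1) ≤ μ i := by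
  have htuple : IsExtHornTuple n {i} ∅ ∅ {i+1} {1} ∅ := by
    refine ⟨Finset.singleton_subset_iff.mpr (Finset.mem_range.mpr (by omega)),
      Finset.empty_subset _, Finset.empty_subset _,
      Finset.singleton_subset_iff.mpr (Finset.mem_range.mpr (by omega)),
      Finset.singleton_subset_iff.mpr (Finset.mem_range.mpr (by omega)),
      Finset.empty_subset _,
      Finset.disjoint_empty_right _, Finset.disjoint_empty_left _,
      Finset.disjoint_empty_right _, by simp, by simp, by simp,
      ∅, ∅, {i}, {1}, ∅, ∅,
      Finset.empty_subset _, Finset.empty_subset _,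
      Finset.singleton_subset_iff.mpr (Finset.mem_range.mpr (by omega)),
      Finset.singleton_subset_iff.mpr (Finset.mem_range.mpr (by omega)),
      Finset.empty_subset _, Finset.empty_subset _,
      by simp, by simp, by simp, by simp, by simp, by simp,
      ?_, ?_, ?_, ?_, ?_, ?_⟩
    · rw [tau_empty]
      exact lr_refl _ 0 (fun _ _ => rfl)
    · rw [tau_singletonFun, tau_singletonFun, tau_singletonFun]
      have : stepf 1 = stepf (i + 1 - i) := by norm_num
      rw [this]
      exact lr_step (by omega)
    · rw [tau_empty]
      exact lr_refl _ 0 (fun _ _ => rfl)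
    · rw [tau_singletonFun, tau_empty]
      exact lr_refl (stepf i) 1 (stepf_supp i)
    · rw [tau_empty]
      exact lr_refl _ 0 (fun _ _ => rfl)
    · rw [tau_singletonFun, tau_empty]
      exact lr_full (stepf 1) 1 (stepf_supp 1) (stepf_antitone 1)
  have hineq := hEH {i} ∅ ∅ {i+1} {1} ∅ htuple
  simp only [Finset.sum_empty, Finset.sum_singleton] at hineq
  have hrp : rowPartition p 1 = 0 := by rw [rowPartition]; norm_num
  rw [hrp] at hineq
  omega

/-! ### conjugate-partition counting -/

lemma conj_lt_iff {n : ℕ} {μ : ℕ → ℕ} (hμ : IsPartitionN n μ) (c j : ℕ) :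
    c < μ j ↔ j < conjugatePart μ c := by
  set S : Set ℕ := {j : ℕ | c < μ j} with hS
  have hlower : ∀ a b : ℕ, a ≤ b → b ∈ S → a ∈ S := by
    intro a b hab hb
    exact lt_of_lt_of_le hb (hμ.1 hab)
  have hsub : S ⊆ Set.Iio n := by
    intro a ha
    simp only [Set.mem_Iio]
    by_contra h
    rw [hS, Set.mem_setOf_eq, hμ.2 a (by omega)] at ha
    omega
  have hfin : S.Finite := (Set.finite_Iio n).subset hsub
  have hne : {m : ℕ | m ∉ S}.Nonempty := ⟨n, fun h => by simpa using hsub h⟩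
  set k := sInf {m : ℕ | m ∉ S} with hk
  have hkn : k ∉ S := Nat.sInf_mem hne
  have hklt : ∀ a, a < k → a ∈ S := by
    intro a ha
    by_contra h
    have h2 : sInf {m : ℕ | m ∉ S} ≤ a := Nat.sInf_le h
    omega
  have hSeq : S = Set.Iio k := by
    ext a
    simp only [Set.mem_Iio]
    constructor
    · intro ha
      by_contra h
      exact hkn (hlower k a (by omega) ha)
    · exact hklt a
  have hcard : conjugatePart μ c = k := by
    rw [conjugatePart]
    rw [show {j : ℕ | c < μ j} = S from rfl, hSeq, ← Finset.coe_range,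
      Set.ncard_coe_finset, Finset.card_range]
  rw [hcard]
  constructor
  · intro h
    have : j ∈ S := h
    rw [hSeq] at this; exact this
  · intro h
    have : j ∈ S := hSeq ▸ Set.mem_Iio.mpr h
    exact this

lemma conj_le {n : ℕ} {μ : ℕ → ℕ} (hμ : IsPartitionN n μ) (c : ℕ) :
    conjugatePart μ c ≤ n := by
  rw [conjugatePart]
  have hsub : {j : ℕ | c < μ j} ⊆ Set.Iio n := by
    intro a ha
    simp only [Set.mem_Iio]
    by_contra h
    rw [Set.mem_setOf_eq, hμ.2 a (by omega)] at ha
    omega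
  calc Set.ncard {j : ℕ | c < μ j} ≤ (Set.Iio n).ncard :=
        Set.ncard_le_ncard hsub (Set.finite_Iio n)
    _ = n := by rw [← Finset.coe_range, Set.ncard_coe_finset, Finset.card_range]

lemma count_lemma {n : ℕ} {μ ν : ℕ → ℕ} (hμ : IsPartitionN n μ) (hν : IsPartitionN n ν) :
    max (μ 0) (ν 0) ≤
      Set.ncard {c : ℕ | conjugatePart μ c = conjugatePart ν c ∧ 0 < conjugatePart μ c} +
      ∑ i ∈ Finset.range n, (max (μ i) (ν i) - min (μ i) (ν i)) := by
  classical
  set E : Set ℕ := {c : ℕ | conjugatePart μ c = conjugatePart ν c ∧ 0 < conjugatePart μ c}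
  set U : Set ℕ := {c : ℕ | conjugatePart μ c ≠ conjugatePart ν c} with hU
  have hEsub : E ⊆ Set.Iio (μ 0) := by
    intro c hc
    exact Set.mem_Iio.mpr ((conj_lt_iff hμ c 0).mpr hc.2)
  have hUsub : U ⊆ Set.Iio (max (μ 0) (ν 0)) := by
    intro c hc
    rw [hU, Set.mem_setOf_eq] at hc
    simp only [Set.mem_Iio]
    rcases Nat.lt_or_ge 0 (conjugatePart μ c) with h | h
    · have := (conj_lt_iff hμ c 0).mpr h; omega
    · have h0 : conjugatePart μ c = 0 := by omega
      have h1 : 0 < conjugatePart ν c := by omega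
      have := (conj_lt_iff hν c 0).mpr h1; omega
  have hEfin : E.Finite := (Set.finite_Iio _).subset hEsub
  have hUfin : U.Finite := (Set.finite_Iio _).subset hUsub
  have hcover : Set.Iio (max (μ 0) (ν 0)) ⊆ E ∪ U := by
    intro c hc
    simp only [Set.mem_Iio] at hc
    by_cases h : conjugatePart μ c = conjugatePart ν c
    · left
      refine ⟨h, ?_⟩
      rcases Nat.lt_or_ge c (μ 0) with h1 | h1
      · exact (conj_lt_iff hμ c 0).mp h1
      · have h2 : c < ν 0 := by omega
        have := (conj_lt_iff hν c 0).mp h2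
        omega
    · right; exact h
  -- the finset of symmetric-difference boxes
  set V : Finset (ℕ × ℕ) := (Finset.range n).biUnion
    (fun i => {i} ×ˢ Finset.Ico (min (μ i) (ν i)) (max (μ i) (ν i))) with hV
  have hVcard : V.card = ∑ i ∈ Finset.range n, (max (μ i) (ν i) - min (μ i) (ν i)) := by
    rw [hV, Finset.card_biUnion]
    · apply Finset.sum_congr rfl
      intro i _
      rw [Finset.card_product, Finset.card_singleton, Nat.card_Ico, one_mul]
    · intro a _ b _ hab
      rw [Function.onFun, Finset.disjoint_left]
      intro q hqa hqb
      rw [Finset.mem_product, Finset.mem_singleton] at hqa hqb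
      exact hab (hqa.1 ▸ hqb.1 ▸ rfl)
  have hUcard : U.ncard ≤ V.card := by
    rw [← Set.ncard_coe_finset V]
    apply Set.ncard_le_ncard_of_injOn
      (fun c => (min (conjugatePart μ c) (conjugatePart ν c), c))
    · intro c hc
      rw [hU, Set.mem_setOf_eq] at hc
      set i := min (conjugatePart μ c) (conjugatePart ν c) with hi
      have hin : i < n := by
        have h1 := conj_le hμ c
        have h2 := conj_le hν c
        omega
      simp only [Finset.mem_coe, hV, Finset.mem_biUnion]
      refine ⟨i, Finset.mem_range.mpr hin, ?_⟩
      rw [Finset.mem_product, Finset.mem_singleton, Finset.mem_Ico]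
      refine ⟨rfl, ?_, ?_⟩
      · -- min (μ i) (ν i) ≤ c
        rcases Nat.lt_or_ge (conjugatePart μ c) (conjugatePart ν c) with h | h
        · -- i = conjugatePart μ c; then ¬ (c < μ i)
          have hieq : i = conjugatePart μ c := by omega
          have : ¬ (c < μ i) := fun hlt => by
            have := (conj_lt_iff hμ c i).mp hlt; omega
          omega
        · have hieq : i = conjugatePart ν c := by omega
          have : ¬ (c < ν i) := fun hlt => by
            have := (conj_lt_iff hν c i).mp hlt; omega
          omega
      · -- c < max (μ i) (ν i)
        rcases Nat.lt_or_ge (conjugatePart μ c) (conjugatePart ν c) with h | h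
        · have : i < conjugatePart ν c := by omega
          have := (conj_lt_iff hν c i).mpr this
          omega
        · have : i < conjugatePart μ c := by omega
          have := (conj_lt_iff hμ c i).mpr this
          omega
    · intro a _ b _ hab
      simpa using congrArg Prod.snd hab
  calc max (μ 0) (ν 0) = (Set.Iio (max (μ 0) (ν 0))).ncard := by
        rw [← Finset.coe_range, Set.ncard_coe_finset, Finset.card_range]
    _ ≤ (E ∪ U).ncard := Set.ncard_le_ncard hcover (hEfin.union hUfin)
    _ ≤ E.ncard + U.ncard := Set.ncard_union_le E U
    _ ≤ E.ncard + V.card := by omega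
    _ = _ := by rw [hVcard]


/-! ### the main extended Horn inequality instance -/

lemma main_ineq {n p : ℕ} {μ ν : ℕ → ℕ} (hn : 0 < n)
    (hEH : SatisfiesExtHorn n μ ν (rowPartition p)) :
    (p : ℤ) ≤ (μ 0 : ℤ) + (ν 0 : ℤ) + |(μ 0 : ℤ) - (ν 0 : ℤ)|
      - ∑ i ∈ Finset.range n, |(μ i : ℤ) - (ν i : ℤ)| := by
  classical
  set P' : Finset ℕ := ((Finset.range n).erase 0).filter (fun i => ν i < μ i) with hP'
  set Q' : Finset ℕ := ((Finset.range n).erase 0).filter (fun i => μ i < ν i) with hQ'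
  have h0P : 0 ∉ P' := by
    intro h
    exact absurd (Finset.mem_erase.mp (Finset.mem_filter.mp h).1).1 (by simp)
  have h0Q : 0 ∉ Q' := by
    intro h
    exact absurd (Finset.mem_erase.mp (Finset.mem_filter.mp h).1).1 (by simp)
  have hPsub : P' ⊆ Finset.range n := fun x hx =>
    Finset.mem_of_mem_erase (Finset.mem_filter.mp hx).1
  have hQsub : Q' ⊆ Finset.range n := fun x hx =>
    Finset.mem_of_mem_erase (Finset.mem_filter.mp hx).1
  have hPQ : Disjoint P' Q' := by
    rw [Finset.disjoint_left]
    intro a haP haQ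
    have h1 := (Finset.mem_filter.mp haP).2
    have h2 := (Finset.mem_filter.mp haQ).2
    omega
  set m : ℕ := P'.card with hm
  set q : ℕ := Q'.card with hq
  have hmq : m + q < n := by
    have hsub : P' ∪ Q' ⊆ (Finset.range n).erase 0 := by
      intro x hx
      rcases Finset.mem_union.mp hx with h | h
      · exact (Finset.mem_filter.mp h).1
      · exact (Finset.mem_filter.mp h).1
    have h1 := Finset.card_le_card hsub
    rw [Finset.card_union_of_disjoint hPQ] at h1
    rw [Finset.card_erase_of_mem (Finset.mem_range.mpr hn), Finset.card_range] at h1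
    omega
  -- six auxiliary sets
  set A₁ : Finset ℕ := clSet (onefun m) m with hA₁
  set A₂ : Finset ℕ := clSet (tauRed P') m with hA₂
  set B₁ : Finset ℕ := clSet (tauRed Q') q with hB₁
  set B₂ : Finset ℕ := clSet (onefun q) q with hB₂
  set Cs : Finset ℕ := clSet (onefun (m + q)) (m + q) with hCs
  -- membership bounds for clSet of onefun
  have onefun_mem_bound : ∀ k x : ℕ, x ∈ clSet (onefun k) k → 1 ≤ x ∧ x ≤ k := by
    intro k x hx
    rcases mem_clSet.mp hx with ⟨j, hj, hx⟩
    have : onefun k (k - 1 - j) = 1 := by unfold onefun; rw [if_pos (by omega)]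
    rw [this] at hx
    omega
  have hA₁sub : A₁ ⊆ Finset.range n := by
    intro x hx
    have := onefun_mem_bound m x hx
    exact Finset.mem_range.mpr (by omega)
  have hB₂sub : B₂ ⊆ Finset.range n := by
    intro x hx
    have := onefun_mem_bound q x hx
    exact Finset.mem_range.mpr (by omega)
  have hCsub : Cs ⊆ Finset.range n := by
    intro x hx
    have := onefun_mem_bound (m + q) x hx
    exact Finset.mem_range.mpr (by omega)
  have h0C : 0 ∉ Cs := by
    intro h
    have := onefun_mem_bound (m + q) 0 h
    omega
  -- tauRed clSets are subsets of range n
  have tauRed_mem_bound : ∀ (S : Finset ℕ), 0 ∉ S → S ⊆ Finset.range n →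
      ∀ x, x ∈ clSet (tauRed S) S.card → x ∈ Finset.range n := by
    intro S h0S hSsub x hx
    rcases mem_clSet.mp hx with ⟨j, hj, hx⟩
    have hmem := tau_apply_mem S hj
    have hpos : 1 ≤ tauPartition S (S.card - 1 - j) := tau_pos S h0S (by omega)
    have hlt : tauPartition S (S.card - 1 - j) + j < n :=
      Finset.mem_range.mp (hSsub hmem)
    have : tauRed S (S.card - 1 - j) = tauPartition S (S.card - 1 - j) - 1 := by
      unfold tauRed; rw [if_pos (by omega)]
    rw [this] at hx
    exact Finset.mem_range.mpr (by omega)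
  have hA₂sub : A₂ ⊆ Finset.range n := fun x hx => tauRed_mem_bound P' h0P hPsub x hx
  have hB₁sub : B₁ ⊆ Finset.range n := fun x hx => tauRed_mem_bound Q' h0Q hQsub x hx
  -- the extended Horn tuple
  have htuple : IsExtHornTuple n (insert 0 Q') P' (insert 0 P') Q' Cs {0} := by
    refine ⟨Finset.insert_subset (Finset.mem_range.mpr hn) hQsub, hPsub,
      Finset.insert_subset (Finset.mem_range.mpr hn) hPsub, hQsub, hCsub,
      Finset.singleton_subset_iff.mpr (Finset.mem_range.mpr hn),
      ?_, ?_, Finset.disjoint_singleton_right.mpr h0C,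
      ?_, ?_, ?_,
      A₁, A₂, B₁, B₂, {0}, {0},
      hA₁sub, hA₂sub, hB₁sub, hB₂sub,
      Finset.singleton_subset_iff.mpr (Finset.mem_range.mpr hn),
      Finset.singleton_subset_iff.mpr (Finset.mem_range.mpr hn),
      ?_, ?_, ?_, ?_, by simp, by simp,
      ?_, ?_, ?_, ?_, ?_, ?_⟩
    · -- Disjoint (insert 0 Q') P'
      rw [Finset.disjoint_left]
      intro a ha haP
      rcases Finset.mem_insert.mp ha with h | h
      · exact h0P (h ▸ haP)
      · exact (Finset.disjoint_left.mp hPQ) haP h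
    · -- Disjoint (insert 0 P') Q'
      rw [Finset.disjoint_left]
      intro a ha haQ
      rcases Finset.mem_insert.mp ha with h | h
      · exact h0Q (h ▸ haQ)
      · exact (Finset.disjoint_left.mp hPQ) h haQ
    · rw [Finset.card_insert_of_notMem h0Q, Finset.card_singleton]
    · rw [Finset.card_insert_of_notMem h0P, Finset.card_singleton]
    · rw [clSet_card (onefun_antitone (m + q))]
    · rw [hA₁, clSet_card (onefun_antitone m)]
    · rw [hA₂, clSet_card (tauRed_antitone P')]
    · rw [hB₁, clSet_card (tauRed_antitone Q')]
    · rw [hB₂, clSet_card (onefun_antitone q)]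
    · -- c^{τ(A')}_{τ(A₁), τ(A₂)}
      rw [hA₁, hA₂, tau_clSet (onefun_antitone m) (onefun_supp m),
        tau_clSet (tauRed_antitone P') (fun t ht => tauRed_supp P' ht)]
      apply lrCoeff_pos' _ _ _ 0 m
      · intro t
        unfold onefun
        by_cases ht : t < m
        · rw [if_pos ht]; exact tau_pos P' h0P ht
        · rw [if_neg ht]; exact Nat.zero_le _
      · exact fun i hi => tau_supp P' hi
      · exact fun i hi => absurd hi (Nat.not_lt_zero i)
      · intro t
        unfold tauRed onefun
        rw [hm]
        norm_num
      · exact tauRed_antitone P'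
    · -- c^{τ(B')}_{τ(B₁), τ(B₂)}
      rw [hB₁, hB₂, tau_clSet (tauRed_antitone Q') (fun t ht => tauRed_supp Q' ht),
        tau_clSet (onefun_antitone q) (onefun_supp q)]
      apply lrCoeff_pos' _ _ _ 0 q
      · exact fun t => Nat.sub_le _ _
      · exact fun i hi => tau_supp Q' hi
      · exact fun i hi => absurd hi (Nat.not_lt_zero i)
      · intro t
        unfold onefun tauRed
        rw [hq]
        norm_num
        by_cases ht : t < Q'.card
        · simp only [if_pos ht]
          have := tau_pos Q' h0Q ht
          omega
        · simp only [if_neg ht]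
          omega
      · exact onefun_antitone q
    · -- c^{τ(C')}_{τ(C₁), τ(C₂)}
      rw [tau_zero_singleton]
      exact lr_refl _ 0 (fun _ _ => rfl)
    · -- c^{τ(A)}_{τ(B₁), τ(C₂)}
      rw [tau_insert_zero Q' h0Q, hB₁,
        tau_clSet (tauRed_antitone Q') (fun t ht => tauRed_supp Q' ht),
        tau_zero_singleton]
      exact lr_refl _ q (fun t ht => tauRed_supp Q' ht)
    · -- c^{τ(B)}_{τ(C₁), τ(A₂)}
      rw [tau_insert_zero P' h0P, hA₂,
        tau_clSet (tauRed_antitone P') (fun t ht => tauRed_supp P' ht),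
        tau_zero_singleton]
      exact lr_full _ m (fun t ht => tauRed_supp P' ht) (tauRed_antitone P')
    · -- c^{τ(C)}_{τ(A₁), τ(B₂)}
      rw [hCs, hA₁, hB₂, tau_clSet (onefun_antitone (m + q)) (onefun_supp (m + q)),
        tau_clSet (onefun_antitone m) (onefun_supp m),
        tau_clSet (onefun_antitone q) (onefun_supp q)]
      apply lrCoeff_pos' _ _ _ m (m + q)
      · intro t
        unfold onefun
        by_cases ht : t < m
        · rw [if_pos ht, if_pos (by omega)]
        · rw [if_neg ht]; exact Nat.zero_le _
      · exact onefun_supp (m + q)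
      · intro i hi
        unfold onefun
        rw [if_pos (by omega), if_pos hi]
      · intro t
        unfold onefun
        by_cases ht : t < q
        · rw [if_pos ht, if_pos (by omega), if_neg (by omega)]
        · rw [if_neg ht, if_neg (by omega), if_neg (by omega)]
      · exact onefun_antitone q
  have hineq := hEH (insert 0 Q') P' (insert 0 P') Q' Cs {0} htuple
  rw [Finset.sum_insert h0Q, Finset.sum_insert h0P, Finset.sum_singleton] at hineq
  have hC0 : ∑ k ∈ Cs, ((rowPartition p) k : ℤ) = 0 := by
    apply Finset.sum_eq_zero
    intro x hx
    have hx0 : x ≠ 0 := fun h => h0C (h ▸ hx)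
    rw [rowPartition, if_neg hx0]
    rfl
  have hrp0 : ((rowPartition p) 0 : ℤ) = p := by rw [rowPartition]; norm_num
  rw [hC0, hrp0] at hineq
  -- absolute-value bookkeeping
  have habsP : ∀ i ∈ P', |(μ i : ℤ) - (ν i : ℤ)| = (μ i : ℤ) - (ν i : ℤ) := by
    intro i hi
    have h := (Finset.mem_filter.mp hi).2
    have : (ν i : ℤ) < (μ i : ℤ) := by exact_mod_cast h
    rw [abs_of_nonneg (by omega)]
  have habsQ : ∀ i ∈ Q', |(μ i : ℤ) - (ν i : ℤ)| = (ν i : ℤ) - (μ i : ℤ) := by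
    intro i hi
    have h := (Finset.mem_filter.mp hi).2
    have : (μ i : ℤ) < (ν i : ℤ) := by exact_mod_cast h
    rw [abs_of_nonpos (by omega), neg_sub]
  have habs : ∑ i ∈ (Finset.range n).erase 0, |(μ i : ℤ) - (ν i : ℤ)| =
      (∑ i ∈ P', ((μ i : ℤ) - (ν i : ℤ))) + ∑ i ∈ Q', ((ν i : ℤ) - (μ i : ℤ)) := by
    rw [← Finset.sum_filter_add_sum_filter_not ((Finset.range n).erase 0)
      (fun i => ν i < μ i) (fun i => |(μ i : ℤ) - (ν i : ℤ)|)]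
    congr 1
    · exact Finset.sum_congr rfl (fun i hi => habsP i (by rwa [hP']))
    · rw [← Finset.sum_filter_add_sum_filter_not
        (((Finset.range n).erase 0).filter (fun i => ¬ ν i < μ i))
        (fun i => μ i < ν i) (fun i => |(μ i : ℤ) - (ν i : ℤ)|)]
      have he1 : (((Finset.range n).erase 0).filter (fun i => ¬ ν i < μ i)).filter
          (fun i => μ i < ν i) = Q' := by
        rw [Finset.filter_filter, hQ']
        apply Finset.filter_congr
        intro x _
        constructor
        · exact fun h => h.2
        · exact fun h => ⟨by omega, h⟩
      have he2 : ∑ i ∈ (((Finset.range n).erase 0).filter (fun i => ¬ ν i < μ i)).filter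
          (fun i => ¬ μ i < ν i), |(μ i : ℤ) - (ν i : ℤ)| = 0 := by
        apply Finset.sum_eq_zero
        intro x hx
        have h1 := (Finset.mem_filter.mp hx).2
        have h2 := (Finset.mem_filter.mp (Finset.mem_filter.mp hx).1).2
        have : μ x = ν x := by omega
        rw [this]
        simp
      rw [he1, he2, add_zero]
      exact Finset.sum_congr rfl (fun i hi => habsQ i hi)
  have hsplit : ∑ i ∈ Finset.range n, |(μ i : ℤ) - (ν i : ℤ)| =
      |(μ 0 : ℤ) - (ν 0 : ℤ)| + ∑ i ∈ (Finset.range n).erase 0, |(μ i : ℤ) - (ν i : ℤ)| :=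
    (Finset.add_sum_erase _ _ (Finset.mem_range.mpr hn)).symm
  have hsubP : ∑ i ∈ P', ((μ i : ℤ) - (ν i : ℤ)) =
      (∑ i ∈ P', (μ i : ℤ)) - ∑ i ∈ P', (ν i : ℤ) := Finset.sum_sub_distrib _ _
  have hsubQ : ∑ i ∈ Q', ((ν i : ℤ) - (μ i : ℤ)) =
      (∑ i ∈ Q', (ν i : ℤ)) - ∑ i ∈ Q', (μ i : ℤ) := Finset.sum_sub_distrib _ _
  linarith [hineq, habs, hsplit, hsubP, hsubQ]


end RowCaseAux

/-- Section 3, row case: if `μ, ν ∈ Par_n`, `(p) ∈ Par_n`, `|μ| + |ν| + p` is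
even and `(μ, ν, (p))` satisfies every extended Horn inequality, then with
`k = (|μ| + |ν| − p)/2`: the skew shapes `μ/(μ∧ν)` and `ν/(μ∧ν)` are
horizontal strips, and there are at least `|μ∧ν| − k` columns `i` with
`μ'_i = ν'_i > 0`. -/
theorem row_case_horizontal_strips (n p : ℕ) (μ ν : ℕ → ℕ)
    (hμ : IsPartitionN n μ) (hν : IsPartitionN n ν)
    (hrow : IsPartitionN n (rowPartition p))
    (hparity : Even ((∑ i ∈ Finset.range n, μ i) +
      (∑ i ∈ Finset.range n, ν i) + p))
    (hEH : SatisfiesExtHorn n μ ν (rowPartition p)) :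
    (∀ i, μ (i + 1) ≤ min (μ i) (ν i)) ∧
    (∀ i, ν (i + 1) ≤ min (μ i) (ν i)) ∧
    (∑ i ∈ Finset.range n, (min (μ i) (ν i) : ℤ)) -
        ((∑ i ∈ Finset.range n, (μ i : ℤ)) +
          (∑ i ∈ Finset.range n, (ν i : ℤ)) - (p : ℤ)) / 2 ≤
      (Set.ncard {i : ℕ |
        conjugatePart μ i = conjugatePart ν i ∧ 0 < conjugatePart μ i} : ℤ) := by
  classical
  rcases Nat.eq_zero_or_pos n with hn | hn
  · subst hn
    have hp0 : p = 0 := by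
      have := hrow.2 0 (le_refl 0)
      rwa [rowPartition, if_pos rfl] at this
    refine ⟨?_, ?_, ?_⟩
    · intro i; rw [hμ.2 (i+1) (Nat.zero_le _)]; exact Nat.zero_le _
    · intro i; rw [hν.2 (i+1) (Nat.zero_le _)]; exact Nat.zero_le _
    · subst hp0
      simp only [Finset.range_zero, Finset.sum_empty, Nat.cast_zero]
      norm_num
  · refine ⟨?_, ?_, ?_⟩
    · intro i
      rcases Nat.lt_or_ge (i+1) n with h | h
      · exact le_min (hμ.1 (Nat.le_succ i)) (RowCaseAux.strip_mu hEH h)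
      · rw [hμ.2 (i+1) h]; exact Nat.zero_le _
    · intro i
      rcases Nat.lt_or_ge (i+1) n with h | h
      · exact le_min (RowCaseAux.strip_nu hEH h) (hν.1 (Nat.le_succ i))
      · rw [hν.2 (i+1) h]; exact Nat.zero_le _
    · have hmain := RowCaseAux.main_ineq hn hEH
      have hcount := RowCaseAux.count_lemma hμ hν
      set E : Set ℕ :=
        {i : ℕ | conjugatePart μ i = conjugatePart ν i ∧ 0 < conjugatePart μ i} with hE
      have hcast : ((∑ i ∈ Finset.range n, (max (μ i) (ν i) - min (μ i) (ν i)) : ℕ) : ℤ)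
          = ∑ i ∈ Finset.range n, |(μ i : ℤ) - (ν i : ℤ)| := by
        rw [Nat.cast_sum]
        apply Finset.sum_congr rfl
        intro i _
        rcases le_total (μ i) (ν i) with h | h
        · have h' : (μ i : ℤ) ≤ (ν i : ℤ) := by exact_mod_cast h
          rw [max_eq_right h, min_eq_left h, abs_sub_comm, abs_of_nonneg (by omega)]
          exact Nat.cast_sub h
        · have h' : (ν i : ℤ) ≤ (μ i : ℤ) := by exact_mod_cast h
          rw [max_eq_left h, min_eq_right h, abs_of_nonneg (by omega)]
          exact Nat.cast_sub h
      have hcount' : (max (μ 0) (ν 0) : ℤ) ≤ (E.ncard : ℤ)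
          + ∑ i ∈ Finset.range n, |(μ i : ℤ) - (ν i : ℤ)| := by
        have h1 : ((max (μ 0) (ν 0) : ℕ) : ℤ) ≤
            ((E.ncard + ∑ i ∈ Finset.range n, (max (μ i) (ν i) - min (μ i) (ν i)) : ℕ) : ℤ) := by
          exact_mod_cast hcount
        rw [Nat.cast_add, hcast] at h1
        exact_mod_cast h1
      have hmax2 : 2 * ((max (μ 0) (ν 0) : ℕ) : ℤ) =
          (μ 0 : ℤ) + (ν 0 : ℤ) + |(μ 0 : ℤ) - (ν 0 : ℤ)| := by
        rcases le_total (μ 0) (ν 0) with h | h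
        · have h' : (μ 0 : ℤ) ≤ (ν 0 : ℤ) := by exact_mod_cast h
          rw [max_eq_right h, abs_sub_comm, abs_of_nonneg (by omega)]
          omega
        · have h' : (ν 0 : ℤ) ≤ (μ 0 : ℤ) := by exact_mod_cast h
          rw [max_eq_left h, abs_of_nonneg (by omega)]
          omega
      have h2min : ∀ i ∈ Finset.range n, 2 * ((min (μ i) (ν i) : ℕ) : ℤ) =
          (μ i : ℤ) + (ν i : ℤ) - |(μ i : ℤ) - (ν i : ℤ)| := by
        intro i _
        rcases le_total (μ i) (ν i) with h | h
        · have h' : (μ i : ℤ) ≤ (ν i : ℤ) := by exact_mod_cast h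
          rw [min_eq_left h, abs_sub_comm, abs_of_nonneg (by omega)]
          omega
        · have h' : (ν i : ℤ) ≤ (μ i : ℤ) := by exact_mod_cast h
          rw [min_eq_right h, abs_of_nonneg (by omega)]
          omega
      have hsum2 : 2 * (∑ i ∈ Finset.range n, ((min (μ i) (ν i) : ℕ) : ℤ)) =
          (∑ i ∈ Finset.range n, (μ i : ℤ)) + (∑ i ∈ Finset.range n, (ν i : ℤ))
          - ∑ i ∈ Finset.range n, |(μ i : ℤ) - (ν i : ℤ)| := by
        rw [Finset.mul_sum, Finset.sum_congr rfl h2min, Finset.sum_sub_distrib,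
          Finset.sum_add_distrib]
      obtain ⟨t, ht⟩ := hparity
      have htz : (∑ i ∈ Finset.range n, (μ i : ℤ)) + (∑ i ∈ Finset.range n, (ν i : ℤ))
          + (p : ℤ) = 2 * (t : ℤ) := by
        have h1 : ((∑ i ∈ Finset.range n, μ i + ∑ i ∈ Finset.range n, ν i + p : ℕ) : ℤ)
            = ((t + t : ℕ) : ℤ) := by rw [ht]
        push_cast at h1
        omega
      have hdiv : ((∑ i ∈ Finset.range n, (μ i : ℤ)) + (∑ i ∈ Finset.range n, (ν i : ℤ))
          - (p : ℤ)) / 2 = (t : ℤ) - (p : ℤ) := by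
        have hnum : (∑ i ∈ Finset.range n, (μ i : ℤ)) + (∑ i ∈ Finset.range n, (ν i : ℤ))
            - (p : ℤ) = 2 * ((t : ℤ) - (p : ℤ)) := by omega
        rw [hnum, Int.mul_ediv_cancel_left _ (by norm_num)]
      push_cast at hcount' hmax2 hsum2
      rw [hdiv]
      linarith [hmain, hcount', hmax2, hsum2, htz]
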